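/- Every nonnegative polynomial V on ℝ^n belongs to the reverse Hölder class B_∞, i.e., there is a constant C (depending on V) such that for every ball B(x,r), the essential supremum of V over B(x,r) is at most C times the average of V over B(x,r). -/

import Mathlib

open MeasureTheory Metric Set

private lemma contP {n : ℕ} (Q : MvPolynomial (Fin n) ℝ) :
    Continuous fun y : EuclideanSpace ℝ (Fin n) => MvPolynomial.eval y Q := by
  have h1 : Continuous fun x : Fin n → ℝ => MvPolynomial.eval x Q :=
    MvPolynomial.continuous_eval Q
  exact h1.comp (PiLp.continuous_ofLp ..)

private lemma zero_of_ball {n : ℕ} (Q : MvPolynomial (Fin n) ℝ)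
    (h : ∀ y ∈ ball (0 : EuclideanSpace ℝ (Fin n)) 1, MvPolynomial.eval y Q = 0) : Q = 0 := by
  apply MvPolynomial.funext
  intro y0
  have key : ∀ (R : MvPolynomial (Fin n) ℝ) (t : ℝ),
      Polynomial.eval t (MvPolynomial.aeval (fun i => Polynomial.C (y0 i) * Polynomial.X) R)
        = MvPolynomial.eval (fun i => y0 i * t) R := by
    intro R t
    induction R using MvPolynomial.induction_on with
    | C a => simp
    | add f g hf hg => simp [hf, hg]
    | mul_X f i hf => rw [map_mul, Polynomial.eval_mul, hf]; simp
  set y : EuclideanSpace ℝ (Fin n) := (WithLp.equiv 2 (Fin n → ℝ)).symm y0 with hy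
  set p : Polynomial ℝ := MvPolynomial.aeval (fun i => Polynomial.C (y0 i) * Polynomial.X) Q
    with hpdef
  have hp0 : p = 0 := by
    apply Polynomial.eq_zero_of_infinite_isRoot
    have hss : Ioo (0:ℝ) (1/(‖y‖+1)) ⊆ {t | p.IsRoot t} := by
      intro t ht
      have ht1 : 0 < t := ht.1
      have ht2 : t < 1/(‖y‖+1) := ht.2
      have hden : (0:ℝ) < ‖y‖ + 1 := by positivity
      have hmem : t • y ∈ ball (0 : EuclideanSpace ℝ (Fin n)) 1 := by
        rw [mem_ball_zero_iff, norm_smul]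
        calc ‖t‖ * ‖y‖ ≤ ‖t‖ * (‖y‖+1) := by
              apply mul_le_mul_of_nonneg_left (by linarith) (norm_nonneg _)
          _ < 1 := by
              rw [Real.norm_of_nonneg ht1.le]
              calc t * (‖y‖+1) < (1/(‖y‖+1)) * (‖y‖+1) := mul_lt_mul_of_pos_right ht2 hden
                _ = 1 := by field_simp
      have h0 := h _ hmem
      have harg : (fun i => y0 i * t) = fun i => (t • y : EuclideanSpace ℝ (Fin n)) i := by
        funext i
        simp [hy, mul_comm]
      show p.eval t = 0
      rw [key Q t, harg]
      exact h0
    exact Set.Infinite.mono hss (Set.Ioo_infinite (by positivity))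
  have h1 := key Q 1
  rw [← hpdef, hp0] at h1
  simp only [Polynomial.eval_zero] at h1
  simpa using h1.symm

private lemma deg_aeval_le {n : ℕ} (g : Fin n → MvPolynomial (Fin n) ℝ)
    (hg : ∀ i, (g i).totalDegree ≤ 1) (Q : MvPolynomial (Fin n) ℝ) :
    (MvPolynomial.aeval g Q).totalDegree ≤ Q.totalDegree := by
  rw [MvPolynomial.aeval_def, MvPolynomial.eval₂_eq]
  refine (MvPolynomial.totalDegree_finset_sum _ _).trans (Finset.sup_le fun d hd => ?_)
  refine (MvPolynomial.totalDegree_mul _ _).trans ?_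
  have h1 : (algebraMap ℝ (MvPolynomial (Fin n) ℝ) (Q.coeff d)).totalDegree = 0 :=
    MvPolynomial.totalDegree_C _
  rw [h1, zero_add]
  refine (MvPolynomial.totalDegree_finset_prod _ _).trans ?_
  have h2 : ∑ i ∈ d.support, (g i ^ d i).totalDegree ≤ ∑ i ∈ d.support, d i := by
    refine Finset.sum_le_sum fun i _ => ?_
    calc (g i ^ d i).totalDegree ≤ d i * (g i).totalDegree := MvPolynomial.totalDegree_pow _ _
      _ ≤ d i * 1 := Nat.mul_le_mul_left _ (hg i)
      _ = d i := Nat.mul_one _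
  refine h2.trans ?_
  have h3 : ∑ i ∈ d.support, d i = d.sum fun _ e => e := rfl
  rw [h3]
  exact Finset.le_sup (f := fun m : Fin n →₀ ℕ => m.sum fun _ e => e) hd

set_option maxHeartbeats 1000000 in
set_option synthInstance.maxHeartbeats 400000 in
private lemma unit_ball_bound {n : ℕ} (d : ℕ) :
    ∃ C0 : ℝ, 0 < C0 ∧ ∀ Q : MvPolynomial (Fin n) ℝ, Q.totalDegree ≤ d →
      ∀ y ∈ closedBall (0 : EuclideanSpace ℝ (Fin n)) 1,
        |MvPolynomial.eval y Q| ≤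
          C0 * ∫ z in ball (0 : EuclideanSpace ℝ (Fin n)) 1, |MvPolynomial.eval z Q| := by
  classical
  set W := MvPolynomial.restrictTotalDegree (Fin n) ℝ d with hW
  haveI : Module.Finite ℝ W := inferInstance
  haveI : Module.Free ℝ W := Module.Free.of_divisionRing ℝ W
  set N := Module.finrank ℝ W with hN
  set b := Module.finBasis ℝ W with hb
  set F : (Fin N → ℝ) → EuclideanSpace ℝ (Fin n) → ℝ :=
    fun v z => ∑ i, v i * MvPolynomial.eval z ((b i : W) : MvPolynomial (Fin n) ℝ) with hF
  have hFcont : ∀ v, Continuous (F v) := fun v =>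
    continuous_finset_sum _ fun i _ => continuous_const.mul (contP _)
  have hFsub : ∀ v w z, F v z - F w z = F (v - w) z := by
    intro v w z
    simp [hF, sub_mul, Finset.sum_sub_distrib]
  have hFsmul : ∀ (t : ℝ) v z, F (t • v) z = t * F v z := by
    intro t v z
    simp [hF, Finset.mul_sum, mul_assoc]
  -- coefficient bound on closed ball
  have hM : ∀ i : Fin N, ∃ Mi : ℝ, ∀ y ∈ closedBall (0 : EuclideanSpace ℝ (Fin n)) 1,
      ‖MvPolynomial.eval y ((b i : W) : MvPolynomial (Fin n) ℝ)‖ ≤ Mi := fun i =>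
    (isCompact_closedBall _ _).exists_bound_of_continuousOn (contP _).continuousOn
  choose M hMspec using hM
  set K := ∑ i, M i with hK
  have hM0 : ∀ i, 0 ≤ M i := fun i =>
    le_trans (norm_nonneg _) (hMspec i 0 (mem_closedBall_self zero_le_one))
  have hK0 : 0 ≤ K := Finset.sum_nonneg fun i _ => hM0 i
  have hFbound : ∀ v, ∀ y ∈ closedBall (0 : EuclideanSpace ℝ (Fin n)) 1, |F v y| ≤ K * ‖v‖ := by
    intro v y hy
    calc |F v y| ≤ ∑ i, |v i * MvPolynomial.eval y ((b i : W) : MvPolynomial (Fin n) ℝ)| :=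
          Finset.abs_sum_le_sum_abs _ _
      _ ≤ ∑ i, M i * ‖v‖ := by
          refine Finset.sum_le_sum fun i _ => ?_
          rw [abs_mul]
          calc |v i| * |MvPolynomial.eval y ((b i : W) : MvPolynomial (Fin n) ℝ)|
              ≤ ‖v‖ * M i :=
                mul_le_mul (norm_le_pi_norm v i) (hMspec i y hy) (abs_nonneg _) (norm_nonneg _)
            _ = M i * ‖v‖ := mul_comm _ _
      _ = K * ‖v‖ := by rw [hK, Finset.sum_mul]
  have hint : ∀ v, IntegrableOn (fun z => |F v z|) (ball (0 : EuclideanSpace ℝ (Fin n)) 1)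
      volume := fun v =>
    (((hFcont v).abs).continuousOn.integrableOn_compact (isCompact_closedBall _ _)).mono_set
      ball_subset_closedBall
  set f : (Fin N → ℝ) → ℝ :=
    fun v => ∫ z in ball (0 : EuclideanSpace ℝ (Fin n)) 1, |F v z| with hf
  set vB := (volume (ball (0 : EuclideanSpace ℝ (Fin n)) 1)).toReal with hvB
  have hvB0 : 0 ≤ vB := ENNReal.toReal_nonneg
  have hf0 : ∀ v, 0 ≤ f v := fun v => integral_nonneg fun z => abs_nonneg _
  -- continuity of f
  have hfcont : Continuous f := by
    rw [Metric.continuous_iff]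
    intro v ε hε
    refine ⟨ε / ((K + 1) * (vB + 1)), by positivity, fun w hw => ?_⟩
    have hdiff : f w - f v = ∫ z in ball (0 : EuclideanSpace ℝ (Fin n)) 1, (|F w z| - |F v z|) :=
      (integral_sub (hint w) (hint v)).symm
    have hbd : ∀ z ∈ ball (0 : EuclideanSpace ℝ (Fin n)) 1,
        ‖|F w z| - |F v z|‖ ≤ (K + 1) * dist w v := by
      intro z hz
      rw [Real.norm_eq_abs]
      calc |(|F w z| - |F v z|)| ≤ |F w z - F v z| := abs_abs_sub_abs_le_abs_sub _ _
        _ = |F (w - v) z| := by rw [hFsub]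
        _ ≤ K * ‖w - v‖ := hFbound _ z (ball_subset_closedBall hz)
        _ ≤ (K + 1) * dist w v := by
            rw [dist_eq_norm]
            exact mul_le_mul_of_nonneg_right (by linarith) (norm_nonneg _)
    have hnorm : ‖∫ z in ball (0 : EuclideanSpace ℝ (Fin n)) 1, (|F w z| - |F v z|)‖ ≤
        (K + 1) * dist w v * vB :=
      norm_setIntegral_le_of_norm_le_const measure_ball_lt_top hbd
    rw [Real.dist_eq, ← hdiff, ← Real.norm_eq_abs] at *
    calc ‖f w - f v‖ ≤ (K + 1) * dist w v * vB := by rw [hdiff]; exact hnorm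
      _ < ε := by
        have h1 : dist w v < ε / ((K + 1) * (vB + 1)) := hw
        have h2 : 0 < (K + 1) * (vB + 1) := by positivity
        rw [div_eq_inv_mul] at h1
        calc (K + 1) * dist w v * vB ≤ dist w v * ((K + 1) * (vB + 1)) := by
              nlinarith [dist_nonneg (x := w) (y := v)]
          _ < (((K + 1) * (vB + 1))⁻¹ * ε) * ((K + 1) * (vB + 1)) :=
              mul_lt_mul_of_pos_right h1 h2
          _ = ε := by field_simp
  -- relate F to polynomials
  have heval : ∀ (v : Fin N → ℝ) (z : EuclideanSpace ℝ (Fin n)),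
      F v z = MvPolynomial.eval z (((∑ i, v i • b i : W) : W) : MvPolynomial (Fin n) ℝ) := by
    intro v z
    have hcoe : (((∑ i, v i • b i : W) : W) : MvPolynomial (Fin n) ℝ)
        = ∑ i, v i • ((b i : W) : MvPolynomial (Fin n) ℝ) := by
      push_cast
      rfl
    rw [hcoe, map_sum]
    refine Finset.sum_congr rfl fun i _ => ?_
    rw [MvPolynomial.smul_eval]
  -- nontriviality
  haveI hWnt : Nontrivial W := by
    refine ⟨⟨1, ?_⟩, 0, fun hc => ?_⟩
    · rw [MvPolynomial.mem_restrictTotalDegree]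
      simp [MvPolynomial.totalDegree_one]
    · have := congrArg (Subtype.val) hc
      simp only [Submodule.coe_zero] at this
      exact one_ne_zero this
  have hNpos : 0 < N := hN ▸ Module.finrank_pos
  haveI : Nonempty (Fin N) := ⟨⟨0, hNpos⟩⟩
  have hsph : ∃ v : Fin N → ℝ, ‖v‖ = 1 := by
    obtain ⟨v, hv⟩ := NormedSpace.sphere_nonempty (E := Fin N → ℝ) (x := 0) (r := 1)
      |>.mpr zero_le_one
    exact ⟨v, by simpa [mem_sphere_zero_iff_norm] using hv⟩
  obtain ⟨v1, hv1⟩ := hsph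
  obtain ⟨vm, hvmS, hvmmin⟩ := (isCompact_sphere (0 : Fin N → ℝ) 1).exists_isMinOn
    ⟨v1, by simpa [mem_sphere_zero_iff_norm] using hv1⟩ hfcont.continuousOn
  set c := f vm with hc
  have hvm1 : ‖vm‖ = 1 := by simpa [mem_sphere_zero_iff_norm] using hvmS
  have hvm0 : vm ≠ 0 := fun hcon => by simp [hcon] at hvm1
  -- positivity of the minimum
  have hcpos : 0 < c := by
    have hQm : (((∑ i, vm i • b i : W) : W) : MvPolynomial (Fin n) ℝ) ≠ 0 := by
      intro hcon
      have hW0 : (∑ i, vm i • b i : W) = 0 := Subtype.ext hcon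
      have := Fintype.linearIndependent_iff.mp b.linearIndependent vm hW0
      exact hvm0 (funext this)
    obtain ⟨z0, hz0b, hz0⟩ : ∃ z ∈ ball (0 : EuclideanSpace ℝ (Fin n)) 1, F vm z ≠ 0 := by
      by_contra hcon
      push_neg at hcon
      refine hQm (zero_of_ball _ fun y hy => ?_)
      rw [← heval]
      exact hcon y hy
    rw [hc, hf]
    rw [setIntegral_pos_iff_support_of_nonneg_ae (ae_of_all _ fun z => abs_nonneg _)
      (hint vm)]
    have hopen : IsOpen {z : EuclideanSpace ℝ (Fin n) | F vm z ≠ 0} :=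
      isOpen_ne.preimage (hFcont vm)
    have hsubset : ({z : EuclideanSpace ℝ (Fin n) | F vm z ≠ 0}
        ∩ ball (0 : EuclideanSpace ℝ (Fin n)) 1) ⊆
        (Function.support fun z => |F vm z|) ∩ ball (0 : EuclideanSpace ℝ (Fin n)) 1 := by
      intro z hz
      exact ⟨fun hzero => hz.1 (abs_eq_zero.mp hzero), hz.2⟩
    refine lt_of_lt_of_le ?_ (measure_mono hsubset)
    exact (hopen.inter isOpen_ball).measure_pos volume ⟨z0, hz0, hz0b⟩
  -- lower bound c * ‖v‖ ≤ f v
  have hlow : ∀ v : Fin N → ℝ, c * ‖v‖ ≤ f v := by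
    intro v
    rcases eq_or_ne v 0 with rfl | hv
    · simp [hf0]
    · have hnv : (0:ℝ) < ‖v‖ := norm_pos_iff.mpr hv
      set w := ‖v‖⁻¹ • v with hwdef
      have hwS : w ∈ sphere (0 : Fin N → ℝ) 1 := by
        rw [mem_sphere_zero_iff_norm, hwdef, norm_smul, norm_inv, norm_norm]
        field_simp
      have hfw : c ≤ f w := hvmmin hwS
      have hvw : v = ‖v‖ • w := by
        rw [hwdef, smul_smul]
        field_simp
        simp
      have habs : ∀ z : EuclideanSpace ℝ (Fin n), |F v z| = ‖v‖ * |F w z| := by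
        intro z
        conv_lhs => rw [hvw]
        rw [hFsmul, abs_mul, abs_of_nonneg (norm_nonneg v)]
      have hfv : f v = ‖v‖ * f w := by
        rw [hf]
        simp only [habs]
        simp only [← smul_eq_mul]
        rw [integral_smul]
      rw [hfv]
      calc c * ‖v‖ ≤ f w * ‖v‖ := mul_le_mul_of_nonneg_right hfw (norm_nonneg v)
        _ = ‖v‖ * f w := mul_comm _ _
  -- conclusion
  refine ⟨(K + 1) / c, by positivity, fun Q hQd y hy => ?_⟩
  obtain ⟨v, hrec⟩ : ∃ v : Fin N → ℝ,
      (((∑ i, v i • b i : W) : W) : MvPolynomial (Fin n) ℝ) = Q := by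
    refine ⟨⇑(b.repr ⟨Q, (MvPolynomial.mem_restrictTotalDegree _ _ _).mpr hQd⟩), ?_⟩
    rw [b.sum_repr]
  have hFQ : ∀ z : EuclideanSpace ℝ (Fin n), F v z = MvPolynomial.eval z Q := by
    intro z
    rw [heval, hrec]
  have hfQ : f v = ∫ z in ball (0 : EuclideanSpace ℝ (Fin n)) 1, |MvPolynomial.eval z Q| := by
    rw [hf]
    refine setIntegral_congr_fun measurableSet_ball fun z _ => ?_
    rw [hFQ]
  calc |MvPolynomial.eval y Q| = |F v y| := by rw [hFQ]
    _ ≤ K * ‖v‖ := hFbound v y hy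
    _ ≤ (K + 1) * ‖v‖ := mul_le_mul_of_nonneg_right (by linarith) (norm_nonneg _)
    _ = (K + 1) / c * (c * ‖v‖) := by field_simp
    _ ≤ (K + 1) / c * f v := by
        refine mul_le_mul_of_nonneg_left (hlow v) ?_
        positivity
    _ = (K + 1) / c * ∫ z in ball (0 : EuclideanSpace ℝ (Fin n)) 1,
        |MvPolynomial.eval z Q| := by rw [hfQ]

/-- Every nonnegative polynomial on `ℝⁿ` belongs to the reverse Hölder class `B_∞`:
its essential sup over any ball is controlled by its average over the ball. -/
theorem stmt_1 {n : ℕ} (P : MvPolynomial (Fin n) ℝ)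
    (hP : ∀ x : EuclideanSpace ℝ (Fin n), 0 ≤ MvPolynomial.eval x P) :
    ∃ C : ℝ, 0 < C ∧ ∀ (x : EuclideanSpace ℝ (Fin n)) (r : ℝ), 0 < r →
      essSup (fun y : EuclideanSpace ℝ (Fin n) => ENNReal.ofReal (MvPolynomial.eval y P))
          (volume.restrict (ball x r)) ≤
        ENNReal.ofReal
          (C * ((volume (ball x r)).toReal⁻¹ * ∫ y in ball x r, MvPolynomial.eval y P)) := by
  obtain ⟨C0, hC0, hC0spec⟩ := unit_ball_bound (n := n) P.totalDegree
  set vB1 := volume (ball (0 : EuclideanSpace ℝ (Fin n)) 1) with hvB1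
  have hvB1pos : 0 < vB1 := measure_ball_pos _ _ one_pos
  have hvB1top : vB1 < ⊤ := measure_ball_lt_top
  set vB := vB1.toReal with hvB
  have hvBpos : 0 < vB := ENNReal.toReal_pos hvB1pos.ne' hvB1top.ne
  refine ⟨C0 * vB, by positivity, fun x r hr => ?_⟩
  have hrn : (0:ℝ) < r ^ n := pow_pos hr n
  -- the rescaled polynomial
  set g : Fin n → MvPolynomial (Fin n) ℝ :=
    fun i => r • MvPolynomial.X i + MvPolynomial.C (x i) with hg
  have hgdeg : ∀ i, (g i).totalDegree ≤ 1 := by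
    intro i
    refine (MvPolynomial.totalDegree_add _ _).trans (max_le ?_ ?_)
    · exact (MvPolynomial.totalDegree_smul_le _ _).trans
        (le_of_eq (MvPolynomial.totalDegree_X _))
    · simp [MvPolynomial.totalDegree_C]
  set Q := MvPolynomial.aeval g P with hQ
  have hQdeg : Q.totalDegree ≤ P.totalDegree := deg_aeval_le g hgdeg P
  have hQeval : ∀ z : EuclideanSpace ℝ (Fin n),
      MvPolynomial.eval z Q = MvPolynomial.eval (x + r • z) P := by
    intro z
    have key : ∀ R : MvPolynomial (Fin n) ℝ,
        MvPolynomial.eval z (MvPolynomial.aeval g R)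
          = MvPolynomial.eval (fun i => x i + r * z i) R := by
      intro R
      induction R using MvPolynomial.induction_on with
      | C a => simp
      | add p q hp hq =>
          rw [map_add, map_add, hp, hq, ← map_add]
      | mul_X p i hp =>
          have hgi : MvPolynomial.eval z (g i) = x i + r * z i := by
            rw [hg]
            rw [map_add, MvPolynomial.smul_eval, MvPolynomial.eval_X, MvPolynomial.eval_C]
            ring
          rw [map_mul, map_mul, hp, MvPolynomial.aeval_X, hgi]
          rw [map_mul, MvPolynomial.eval_X]
    have harg : (fun i => x i + r * z i) = (x + r • z : EuclideanSpace ℝ (Fin n)) := by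
      funext i
      simp [PiLp.add_apply, PiLp.smul_apply, smul_eq_mul]
    rw [hQ, key P, harg]
  -- max of P on the closed ball
  obtain ⟨y0, hy0mem, hy0max⟩ := (isCompact_closedBall x r).exists_isMaxOn
    ⟨x, mem_closedBall_self hr.le⟩ (contP P).continuousOn
  have hess : essSup
      (fun y : EuclideanSpace ℝ (Fin n) => ENNReal.ofReal (MvPolynomial.eval y P))
      (volume.restrict (ball x r)) ≤ ENNReal.ofReal (MvPolynomial.eval y0 P) := by
    refine essSup_le_of_ae_le _ ?_
    refine (ae_restrict_iff' measurableSet_ball).mpr (ae_of_all _ fun y hy => ?_)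
    exact ENNReal.ofReal_le_ofReal (hy0max (ball_subset_closedBall hy))
  -- pull the max point back to the unit ball
  set z0 : EuclideanSpace ℝ (Fin n) := r⁻¹ • (y0 - x) with hz0
  have hz0mem : z0 ∈ closedBall (0 : EuclideanSpace ℝ (Fin n)) 1 := by
    rw [mem_closedBall_zero_iff, hz0, norm_smul, norm_inv, Real.norm_of_nonneg hr.le]
    rw [mem_closedBall_iff_norm] at hy0mem
    calc r⁻¹ * ‖y0 - x‖ ≤ r⁻¹ * r :=
          mul_le_mul_of_nonneg_left hy0mem (inv_nonneg.mpr hr.le)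
      _ = 1 := inv_mul_cancel₀ hr.ne'
  have hy0z0 : x + r • z0 = y0 := by
    rw [hz0, smul_smul, mul_inv_cancel₀ hr.ne', one_smul]
    abel
  -- change of variables
  have hIeq : ∫ y in ball x r, MvPolynomial.eval y P
      = r ^ n * ∫ z in ball (0 : EuclideanSpace ℝ (Fin n)) 1,
          MvPolynomial.eval (x + r • z) P := by
    have h1 : ∫ z in ball (0 : EuclideanSpace ℝ (Fin n)) 1,
        MvPolynomial.eval (x + r • z) P
        = (r ^ n)⁻¹ * ∫ w in ball (0 : EuclideanSpace ℝ (Fin n)) r,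
            MvPolynomial.eval (x + w) P := by
      have h := Measure.setIntegral_comp_smul_of_pos (μ := volume)
        (fun w : EuclideanSpace ℝ (Fin n) => MvPolynomial.eval (x + w) P)
        (ball (0 : EuclideanSpace ℝ (Fin n)) 1) hr
      rw [smul_unitBall_of_pos hr, finrank_euclideanSpace_fin] at h
      simpa [smul_eq_mul] using h
    have h2 : ∫ w in ball (0 : EuclideanSpace ℝ (Fin n)) r,
        MvPolynomial.eval (x + w) P = ∫ y in ball x r, MvPolynomial.eval y P := by
      have hpre : (fun w : EuclideanSpace ℝ (Fin n) => x + w) ⁻¹' ball x r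
          = ball (0 : EuclideanSpace ℝ (Fin n)) r := by
        ext w
        simp [mem_ball, dist_eq_norm]
      have h3 := (measurePreserving_add_left
        (volume : Measure (EuclideanSpace ℝ (Fin n))) x).setIntegral_preimage_emb
        ((Homeomorph.addLeft x).toMeasurableEquiv.measurableEmbedding)
        (fun y => MvPolynomial.eval y P) (ball x r)
      rw [hpre] at h3
      exact h3
    rw [h1, h2]
    field_simp
  -- the volume of the ball
  have hvol : volume (ball x r) = ENNReal.ofReal (r ^ n) * vB1 := by
    rcases Nat.eq_zero_or_pos n with hn | hn
    · subst hn
      haveI : Subsingleton (EuclideanSpace ℝ (Fin 0)) :=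
        ⟨fun a b => PiLp.ext fun i => Fin.elim0 i⟩
      have huniv : ∀ (c : EuclideanSpace ℝ (Fin 0)) (s : ℝ), 0 < s → ball c s = univ := by
        intro c s hs
        ext y
        simp [mem_ball, Subsingleton.elim y c, hs]
      rw [hvB1, huniv x r hr, huniv 0 1 one_pos, pow_zero, ENNReal.ofReal_one, one_mul]
    · haveI : Nontrivial (EuclideanSpace ℝ (Fin n)) := by
        have h0 : (EuclideanSpace.single (⟨0, hn⟩ : Fin n) (1:ℝ)) ≠ 0 := by
          intro hcon
          have := congrArg (fun v => v ⟨0, hn⟩) hcon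
          simp [EuclideanSpace.single_apply] at this
        exact ⟨_, _, h0⟩
      rw [hvB1, Measure.addHaar_ball volume x hr.le, finrank_euclideanSpace_fin]
  have hvolR : (volume (ball x r)).toReal = r ^ n * vB := by
    rw [hvol, ENNReal.toReal_mul, ENNReal.toReal_ofReal hrn.le, hvB]
  -- key estimate at the max point
  set I01 := ∫ z in ball (0 : EuclideanSpace ℝ (Fin n)) 1,
      MvPolynomial.eval (x + r • z) P with hI01
  have hmax_le : MvPolynomial.eval y0 P ≤ C0 * I01 := by
    have h4 := hC0spec Q hQdeg z0 hz0mem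
    have h5 : |MvPolynomial.eval z0 Q| = MvPolynomial.eval y0 P := by
      rw [hQeval, hy0z0, abs_of_nonneg (hP _)]
    have h6 : ∫ z in ball (0 : EuclideanSpace ℝ (Fin n)) 1, |MvPolynomial.eval z Q| = I01 := by
      rw [hI01]
      refine setIntegral_congr_fun measurableSet_ball fun z _ => ?_
      rw [hQeval, abs_of_nonneg (hP _)]
    rw [h5, h6] at h4
    exact h4
  -- assemble
  have hRHS : C0 * vB * ((volume (ball x r)).toReal⁻¹ * ∫ y in ball x r,
      MvPolynomial.eval y P) = C0 * I01 := by
    rw [hvolR, hIeq]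
    field_simp
  rw [hRHS]
  exact hess.trans (ENNReal.ofReal_le_ofReal hmax_le)
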